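/- Let E be a real inner product space, p ≥ 2 an integer, σ > 0. Suppose f : E → ℝ is differentiable and σ-uniformly convex of order p, and x* satisfies f(x*) ≤ f(x) for all x. Suppose X : ℝ → E satisfies, for every t ≥ 0, that X has derivative v t at t, where v t = −‖∇f(X t)‖^{−(p−2)/(p−1)} • ∇f(X t) if ∇f(X t) ≠ 0 and v t = 0 otherwise (the p-th rescaled gradient flow). Then for every t ≥ 0: f(X t) − f(x*) ≤ (f(X 0) − f(x*)) * exp(−σ^{1/(p−1)} t). -/

import Mathlib

open Real
open scoped RealInnerProductSpace

/-- Exponential convergence rate of the `p`-th rescaled gradient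
flow for a `σ`-uniformly convex objective (Theorem 9 of the paper):
`f (X t) − f x* ≤ (f (X 0) − f x*) exp(−σ^{1/(p−1)} t)`. -/
theorem rescaled_gradient_flow_uniformly_convex_rate
    {E : Type*} [NormedAddCommGroup E] [InnerProductSpace ℝ E] [CompleteSpace E]
    (p : ℕ) (hp : 2 ≤ p) (σ : ℝ) (hσ : 0 < σ)
    (f : E → ℝ) (hf : Differentiable ℝ f)
    (hucf : ∀ a b : E,
      f a + ⟪gradient f a, b - a⟫ + (σ / (p : ℝ)) * ‖b - a‖ ^ p ≤ f b)
    (xstar : E) (hmin : ∀ a, f xstar ≤ f a)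
    (X v : ℝ → E)
    (hv : ∀ t : ℝ, gradient f (X t) ≠ 0 →
      v t = -(‖gradient f (X t)‖ ^ (-(((p : ℝ) - 2) / ((p : ℝ) - 1)))) • gradient f (X t))
    (hv0 : ∀ t : ℝ, gradient f (X t) = 0 → v t = 0)
    (hX : ∀ t ≥ (0 : ℝ), HasDerivAt X (v t) t) :
    ∀ t ≥ (0 : ℝ), f (X t) - f xstar ≤
      (f (X 0) - f xstar) * Real.exp (-(σ ^ (1 / ((p : ℝ) - 1))) * t) := by
  set P : ℝ := (p : ℝ) with hPdef
  have hP2 : (2 : ℝ) ≤ P := by rw [hPdef]; exact_mod_cast hp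
  have hP1 : (1 : ℝ) < P := by linarith
  have hPm1 : (0 : ℝ) < P - 1 := by linarith
  have hPpos : (0 : ℝ) < P := by linarith
  set q : ℝ := P / (P - 1) with hqdef
  have hq1 : 1 < q := by
    rw [hqdef, lt_div_iff₀ hPm1]; linarith
  have hqpos : 0 < q := by linarith
  have hconj : P.HolderConjugate q := by
    exact (Real.holderConjugate_iff_eq_conjExponent hP1).2 hqdef
  set K : ℝ := σ ^ (1 / (P - 1)) with hKdef
  have hKpos : 0 < K := Real.rpow_pos_of_pos hσ _
  -- Key inequality: K * (f x - f xstar) ≤ ‖gradient f x‖ ^ q (rpow)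
  have key : ∀ x : E, K * (f x - f xstar) ≤ ‖gradient f x‖ ^ q := by
    intro x
    set A : ℝ := ‖gradient f x‖ with hAdef
    have hA0 : (0 : ℝ) ≤ A := norm_nonneg _
    set r : ℝ := ‖xstar - x‖ with hrdef
    have hr0 : (0 : ℝ) ≤ r := norm_nonneg _
    have h1 : f x - f xstar ≤ A * r - (σ / P) * r ^ p := by
      have h2 := hucf x xstar
      have h3 : -⟪gradient f x, xstar - x⟫ ≤ A * r := by
        have habs := abs_real_inner_le_norm (gradient f x) (xstar - x)
        have hneg := neg_abs_le ⟪gradient f x, xstar - x⟫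
        rw [abs_le] at habs
        linarith [habs.1]
      linarith
    have hyoung := Real.young_inequality_of_nonneg
      (mul_nonneg hr0 (Real.rpow_nonneg hσ.le (1 / P)))
      (mul_nonneg hA0 (Real.rpow_nonneg hσ.le (-(1 / P)))) hconj
    have e1 : σ ^ (1 / P) * σ ^ (-(1 / P)) = 1 := by
      rw [← Real.rpow_add hσ]; simp
    have e2 : (r * σ ^ (1 / P)) ^ P = r ^ p * σ := by
      rw [Real.mul_rpow hr0 (Real.rpow_nonneg hσ.le _), ← Real.rpow_mul hσ.le]
      rw [one_div_mul_cancel hPpos.ne', Real.rpow_one, hPdef, Real.rpow_natCast]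
    have e3 : (A * σ ^ (-(1 / P))) ^ q = A ^ q * σ ^ (-(1 / (P - 1))) := by
      rw [Real.mul_rpow hA0 (Real.rpow_nonneg hσ.le _), ← Real.rpow_mul hσ.le]
      congr 1
      rw [hqdef]; field_simp
    have e4 : K * σ ^ (-(1 / (P - 1))) = 1 := by
      rw [hKdef, ← Real.rpow_add hσ]; simp
    have hlhs : r * σ ^ (1 / P) * (A * σ ^ (-(1 / P))) = A * r := by
      calc r * σ ^ (1 / P) * (A * σ ^ (-(1 / P)))
          = A * r * (σ ^ (1 / P) * σ ^ (-(1 / P))) := by ring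
        _ = A * r := by rw [e1, mul_one]
    rw [hlhs, e2, e3] at hyoung
    have hAq0 : (0 : ℝ) ≤ A ^ q := Real.rpow_nonneg hA0 _
    have hs0 : (0 : ℝ) ≤ σ ^ (-(1 / (P - 1))) := Real.rpow_nonneg hσ.le _
    have hdiv : A ^ q * σ ^ (-(1 / (P - 1))) / q ≤ A ^ q * σ ^ (-(1 / (P - 1))) :=
      div_le_self (mul_nonneg hAq0 hs0) hq1.le
    have h6 : f x - f xstar ≤ A ^ q * σ ^ (-(1 / (P - 1))) := by
      have : r ^ p * σ / P = σ / P * r ^ p := by ring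
      linarith [hyoung, h1, hdiv]
    calc K * (f x - f xstar) ≤ K * (A ^ q * σ ^ (-(1 / (P - 1)))) :=
          mul_le_mul_of_nonneg_left h6 hKpos.le
      _ = A ^ q * (K * σ ^ (-(1 / (P - 1)))) := by ring
      _ = A ^ q := by rw [e4, mul_one]
  -- derivative of f ∘ X
  have hD : ∀ t ≥ (0 : ℝ), HasDerivAt (fun s => f (X s) - f xstar)
      ⟪gradient f (X t), v t⟫ t := by
    intro t ht
    have h1 := ((hf (X t)).hasGradientAt).hasFDerivAt
    have h2 := h1.comp_hasDerivAt t (hX t ht)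
    have h3 : HasDerivAt (fun s => f (X s)) ⟪gradient f (X t), v t⟫ t := by
      simpa [Function.comp_def, InnerProductSpace.toDual_apply_apply] using h2
    exact h3.sub_const _
  -- the key differential inequality
  have hbound : ∀ t ≥ (0 : ℝ),
      ⟪gradient f (X t), v t⟫ + K * (f (X t) - f xstar) ≤ 0 := by
    intro t ht
    by_cases h0 : gradient f (X t) = 0
    · rw [hv0 t h0, inner_zero_right]
      have hk := key (X t)
      rw [h0, norm_zero, Real.zero_rpow hqpos.ne'] at hk
      linarith
    · rw [hv t h0]
      have hA : (0 : ℝ) < ‖gradient f (X t)‖ := norm_pos_iff.mpr h0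
      have hinner : ⟪gradient f (X t),
          -(‖gradient f (X t)‖ ^ (-((P - 2) / (P - 1)))) • gradient f (X t)⟫
          = -(‖gradient f (X t)‖ ^ q) := by
        rw [real_inner_smul_right, real_inner_self_eq_norm_mul_norm]
        have hAA : ‖gradient f (X t)‖ * ‖gradient f (X t)‖
            = ‖gradient f (X t)‖ ^ (2 : ℝ) := by
          rw [show (2:ℝ) = ((2:ℕ):ℝ) by norm_num, Real.rpow_natCast]; ring
        rw [hAA]
        have : ‖gradient f (X t)‖ ^ (-((P - 2) / (P - 1)))
            * ‖gradient f (X t)‖ ^ (2 : ℝ) = ‖gradient f (X t)‖ ^ q := by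
          rw [← Real.rpow_add hA]
          congr 1
          rw [hqdef]; field_simp; ring
        rw [← this]; ring
      rw [hinner]
      have hk := key (X t)
      linarith
  -- the Lyapunov function is antitone
  have hh : ∀ t ≥ (0 : ℝ), HasDerivAt
      (fun s => (f (X s) - f xstar) * Real.exp (K * s))
      ((⟪gradient f (X t), v t⟫ + K * (f (X t) - f xstar)) * Real.exp (K * t)) t := by
    intro t ht
    have hlin : HasDerivAt (fun s : ℝ => K * s) K t := by
      simpa using (hasDerivAt_id t).const_mul K
    have he : HasDerivAt (fun s => Real.exp (K * s)) (Real.exp (K * t) * K) t := hlin.exp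
    have := (hD t ht).mul he
    exact this.congr_deriv (by ring)
  have hanti : AntitoneOn (fun s => (f (X s) - f xstar) * Real.exp (K * s))
      (Set.Ici (0 : ℝ)) := by
    apply antitoneOn_of_deriv_nonpos (convex_Ici 0)
    · intro t ht
      exact (hh t ht).continuousAt.continuousWithinAt
    · intro t ht
      rw [interior_Ici] at ht
      exact (hh t ht.le).differentiableAt.differentiableWithinAt
    · intro t ht
      rw [interior_Ici] at ht
      rw [(hh t ht.le).deriv]
      have h1 := hbound t ht.le
      have h2 := (Real.exp_pos (K * t)).le
      nlinarith
  intro t ht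
  have h1 : (f (X t) - f xstar) * Real.exp (K * t)
      ≤ (f (X 0) - f xstar) * Real.exp (K * 0) :=
    hanti Set.self_mem_Ici ht ht
  rw [neg_mul, Real.exp_neg, ← div_eq_mul_inv, le_div_iff₀ (Real.exp_pos _)]
  simpa using h1
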